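/- If pP < 1, then for any fixed plant index n the conditional probability of the system event given that plant n is unavailable satisfies P(S | P_nᶜ) = r^API·(1 - Q^{b-1}), where Q = (1-pP)+pP·(1-pL)^c. (Paper equation (A15).) -/

import Mathlib

open MeasureTheory ProbabilityTheory

open MeasurableSpace Set in
lemma indep_inter_of_disjoint' {Ω ι : Type*} [mΩ : MeasurableSpace Ω] {μ : Measure Ω}
    {m : ι → MeasurableSpace Ω} (hle : ∀ i, m i ≤ mΩ) (hI : iIndep m μ)
    {S T : Set ι} (hST : Disjoint S T) {s t : Set Ω}
    (hs : MeasurableSet[⨆ i ∈ S, m i] s) (ht : MeasurableSet[⨆ i ∈ T, m i] t) :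
    μ (s ∩ t) = μ s * μ t :=
  (Indep_iff _ _ _).1 (indep_iSup_of_disjoint hle hI hST) s t hs ht

open MeasurableSpace Set in
theorem stmt_6
    {Ω : Type*} [MeasurableSpace Ω] (μ : Measure Ω) [IsProbabilityMeasure μ]
    (pA pP pL : ℝ)
    (hpA0 : 0 ≤ pA) (hpA1 : pA ≤ 1) (hpP0 : 0 ≤ pP) (hpP1 : pP ≤ 1)
    (hpL0 : 0 ≤ pL) (hpL1 : pL ≤ 1)
    (a b c : ℕ) (ha : 0 < a) (hb : 0 < b) (hc : 0 < c)
    (A : Fin a → Set Ω) (P : Fin b → Set Ω) (L : Fin b → Fin c → Set Ω)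
    (hmA : ∀ i, MeasurableSet (A i)) (hmP : ∀ j, MeasurableSet (P j))
    (hmL : ∀ j k, MeasurableSet (L j k))
    (hindep : iIndepSet
      (Sum.elim A (Sum.elim P (fun jk : Fin b × Fin c => L jk.1 jk.2))) μ)
    (hPA : ∀ i, (μ (A i)).toReal = pA)
    (hPP : ∀ j, (μ (P j)).toReal = pP)
    (hPL : ∀ j k, (μ (L j k)).toReal = pL)
    (hpPlt : pP < 1) (n : Fin b) :
    (μ[|(P n)ᶜ] ((⋃ i, A i) ∩ ⋃ j, P j ∩ ⋃ k, L j k)).toReal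
        = (1 - (1 - pA) ^ a) *
          (1 - ((1 - pP) + pP * (1 - pL) ^ c) ^ (b - 1)) := by
  classical
  set E : (Fin a ⊕ (Fin b ⊕ Fin b × Fin c)) → Set Ω :=
    Sum.elim A (Sum.elim P (fun jk : Fin b × Fin c => L jk.1 jk.2)) with hEdef
  set m : (Fin a ⊕ (Fin b ⊕ Fin b × Fin c)) → MeasurableSpace Ω :=
    fun i => generateFrom {E i} with hmdef
  have hmE : ∀ i, MeasurableSet (E i) := by
    rintro (i | j | jk)
    · exact hmA i
    · exact hmP j
    · exact hmL jk.1 jk.2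
  have hI : iIndep m μ := (iIndepSet_iff_iIndep _ _).1 hindep
  have hle : ∀ i, m i ≤ _ := fun i => generateFrom_singleton_le (hmE i)
  have hmem : ∀ i, MeasurableSet[m i] (E i) :=
    fun i => measurableSet_generateFrom rfl
  have hEle : ∀ (S : Set (Fin a ⊕ (Fin b ⊕ Fin b × Fin c))) i, i ∈ S →
      MeasurableSet[⨆ i ∈ S, m i] (E i) := by
    intro S i hi
    exact le_biSup m hi _ (hmem i)
  have cr : ∀ s : Set Ω, MeasurableSet s → (μ sᶜ).toReal = 1 - (μ s).toReal := by
    intro s hs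
    rw [prob_compl_eq_one_sub hs, ENNReal.toReal_sub_of_le prob_le_one ENNReal.one_ne_top,
      ENNReal.toReal_one]
  -- measure of the intersection of the Aᶜ
  have hprodA : (μ (⋂ i, (A i)ᶜ)).toReal = (1 - pA) ^ a := by
    set s1 : (Fin a ⊕ (Fin b ⊕ Fin b × Fin c)) → Set Ω :=
      Sum.elim (fun i => (A i)ᶜ) (fun _ => univ) with hs1
    have hms : ∀ i, MeasurableSet[m i] (s1 i) := by
      rintro (i | j | jk)
      · exact (hmem (Sum.inl i)).compl
      · exact MeasurableSet.univ
      · exact MeasurableSet.univ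
    have key := hI.meas_iInter hms
    have hset : (⋂ i, s1 i) = ⋂ i, (A i)ᶜ := by
      rw [iInter_sum]; simp [hs1]
    rw [hset] at key
    rw [key, Fintype.prod_sum_type]
    simp only [hs1, Sum.elim_inl, Sum.elim_inr, measure_univ, Finset.prod_const_one, mul_one]
    rw [ENNReal.toReal_prod]
    have : ∀ i : Fin a, (μ ((A i)ᶜ)).toReal = 1 - pA := by
      intro i; rw [cr _ (hmA i), hPA]
    rw [Finset.prod_congr rfl (fun i _ => this i), Finset.prod_const]
    simp
  -- measure of each P j ∩ ⋃ k, L j k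
  have hG : ∀ j, (μ (P j ∩ ⋃ k, L j k)).toReal = pP - pP * (1 - pL) ^ c := by
    intro j
    set s2 : (Fin a ⊕ (Fin b ⊕ Fin b × Fin c)) → Set Ω :=
      Sum.elim (fun _ => univ)
        (Sum.elim (fun j' => if j' = j then P j else univ)
          (fun jk => if jk.1 = j then (L jk.1 jk.2)ᶜ else univ)) with hs2
    have hms : ∀ i, MeasurableSet[m i] (s2 i) := by
      rintro (i | j' | jk)
      · exact MeasurableSet.univ
      · simp only [hs2, Sum.elim_inr, Sum.elim_inl]
        split
        · next h => subst h; exact hmem (Sum.inr (Sum.inl j'))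
        · exact MeasurableSet.univ
      · simp only [hs2, Sum.elim_inr]
        split
        · next h =>
            exact (hmem (Sum.inr (Sum.inr jk))).compl
        · exact MeasurableSet.univ
    have key := hI.meas_iInter hms
    have hset : (⋂ i, s2 i) = P j ∩ ⋂ k, (L j k)ᶜ := by
      rw [iInter_sum, iInter_sum]
      ext x
      simp only [hs2, Sum.elim_inl, Sum.elim_inr, mem_inter_iff, mem_iInter, mem_univ,
        iInter_univ, univ_inter, mem_compl_iff]
      constructor
      · rintro ⟨h1, h2⟩
        refine ⟨by simpa using h1 j, fun k => by simpa using h2 (j, k)⟩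
      · rintro ⟨h1, h2⟩
        refine ⟨fun j' => ?_, fun jk => ?_⟩
        · by_cases h : j' = j <;> simp [h, h1]
        · by_cases h : jk.1 = j <;> simp [h]
          subst h; exact h2 jk.2
    rw [hset] at key
    have hprodL : (μ (P j ∩ ⋂ k, (L j k)ᶜ)).toReal = pP * (1 - pL) ^ c := by
      rw [key, Fintype.prod_sum_type, Fintype.prod_sum_type]
      simp only [hs2, Sum.elim_inl, Sum.elim_inr, measure_univ, Finset.prod_const_one, one_mul,
        apply_ite μ]
      rw [Fintype.prod_prod_type]
      simp only [measure_univ, Finset.prod_ite_eq', Finset.mem_univ, if_true,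
        Finset.prod_ite_irrel, Finset.prod_const_one]
      rw [ENNReal.toReal_mul, hPP, ENNReal.toReal_prod]
      have : ∀ k : Fin c, (μ ((L j k)ᶜ)).toReal = 1 - pL := by
        intro k; rw [cr _ (hmL j k), hPL]
      rw [Finset.prod_congr rfl (fun k _ => this k), Finset.prod_const]
      simp
    have hdiff : P j ∩ ⋃ k, L j k = P j \ (P j ∩ ⋂ k, (L j k)ᶜ) := by
      ext x
      simp only [mem_inter_iff, mem_iUnion, mem_diff, mem_iInter, mem_compl_iff, not_and,
        not_forall, not_not]
      constructor
      · rintro ⟨h1, k, hk⟩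
        exact ⟨h1, fun _ => ⟨k, hk⟩⟩
      · rintro ⟨h1, h2⟩
        exact ⟨h1, h2 h1⟩
    rw [hdiff, measure_diff inter_subset_left
      ((hmP j).inter (MeasurableSet.iInter fun k => (hmL j k).compl)).nullMeasurableSet
      (measure_ne_top μ _),
      ENNReal.toReal_sub_of_le (measure_mono inter_subset_left) (measure_ne_top μ _),
      hPP, hprodL]
  -- measurability of the blocks P j ∩ ⋃ L j
  have hGmeas : ∀ (V : Set (Fin a ⊕ (Fin b ⊕ Fin b × Fin c))) (j : Fin b),
      Sum.inr (Sum.inl j) ∈ V → (∀ k, Sum.inr (Sum.inr (j, k)) ∈ V) →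
      MeasurableSet[⨆ i ∈ V, m i] (P j ∩ ⋃ k, L j k) := by
    intro V j h1 h2
    exact (hEle V _ h1).inter (MeasurableSet.iUnion fun k => hEle V _ (h2 k))
  -- product over finsets of the complements
  have hprodG : ∀ T : Finset (Fin b),
      μ (⋂ j ∈ T, (P j ∩ ⋃ k, L j k)ᶜ) = ∏ j ∈ T, μ ((P j ∩ ⋃ k, L j k)ᶜ) := by
    intro T
    induction T using Finset.induction_on with
    | empty => simp
    | insert _ _ hj₀ =>
      next j₀ T ih =>
      rw [Finset.set_biInter_insert, Finset.prod_insert hj₀, ← ih]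
      set idx : (Fin a ⊕ (Fin b ⊕ Fin b × Fin c)) → Option (Fin b) :=
        Sum.elim (fun _ => none) (Sum.elim (fun j => some j) (fun jk => some jk.1)) with hidx
      refine indep_inter_of_disjoint' hle hI
        (S := {i | idx i = some j₀}) (T := {i | ∃ j ∈ T, idx i = some j}) ?_ ?_ ?_
      · rw [Set.disjoint_left]
        rintro i h1 ⟨j, hj, h2⟩
        rw [mem_setOf_eq] at h1
        rw [h1] at h2
        obtain rfl : j₀ = j := by simpa using h2
        exact hj₀ hj
      · exact (hGmeas {i | idx i = some j₀} j₀ rfl (fun k => rfl)).compl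
      · refine MeasurableSet.biInter T.countable_toSet (fun j hj => ?_)
        exact (hGmeas {i | ∃ j ∈ T, idx i = some j} j ⟨j, hj, rfl⟩
          (fun k => ⟨j, hj, rfl⟩)).compl
  set U : Set Ω := ⋃ i, A i with hUdef
  set W : Set Ω := ⋃ j, ⋃ (_ : j ≠ n), (P j ∩ ⋃ k, L j k) with hWdef
  have hmU : MeasurableSet U := MeasurableSet.iUnion fun i => hmA i
  have hmW : MeasurableSet W := by
    exact MeasurableSet.iUnion fun j => MeasurableSet.iUnion fun _ =>
      (hmP j).inter (MeasurableSet.iUnion fun k => hmL j k)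
  -- the factorization
  have hsplit : μ ((P n)ᶜ ∩ (U ∩ W)) = μ ((P n)ᶜ) * (μ U * μ W) := by
    have h2 : μ (U ∩ W) = μ U * μ W := by
      refine indep_inter_of_disjoint' hle hI
        (S := Set.range Sum.inl) (T := (Set.range Sum.inl)ᶜ) disjoint_compl_right ?_ ?_
      · exact MeasurableSet.iUnion fun i => hEle _ (Sum.inl i) ⟨i, rfl⟩
      · refine MeasurableSet.iUnion fun j => MeasurableSet.iUnion fun hjn => ?_
        exact (hEle _ (Sum.inr (Sum.inl j)) (by simp)).inter
          (MeasurableSet.iUnion fun k => hEle _ (Sum.inr (Sum.inr (j, k))) (by simp))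
    have h1 : μ ((P n)ᶜ ∩ (U ∩ W)) = μ ((P n)ᶜ) * μ (U ∩ W) := by
      refine indep_inter_of_disjoint' hle hI
        (S := {Sum.inr (Sum.inl n)}) (T := {Sum.inr (Sum.inl n)}ᶜ) disjoint_compl_right ?_ ?_
      · exact (hEle {Sum.inr (Sum.inl n)} (Sum.inr (Sum.inl n)) rfl).compl
      · refine MeasurableSet.inter ?_ ?_
        · exact MeasurableSet.iUnion fun i => hEle _ (Sum.inl i) (by simp)
        · refine MeasurableSet.iUnion fun j => MeasurableSet.iUnion fun hjn => ?_
          exact (hEle _ (Sum.inr (Sum.inl j)) (by simp [hjn])).inter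
            (MeasurableSet.iUnion fun k => hEle _ (Sum.inr (Sum.inr (j, k))) (by simp))
    rw [h1, h2]
  -- rewrite the event
  have hUW : (P n)ᶜ ∩ ((⋃ i, A i) ∩ ⋃ j, P j ∩ ⋃ k, L j k) = (P n)ᶜ ∩ (U ∩ W) := by
    ext x
    simp only [mem_inter_iff, mem_compl_iff, mem_iUnion, hUdef, hWdef]
    constructor
    · rintro ⟨hn, hA, j, hPj, k, hL⟩
      refine ⟨hn, hA, j, ?_, hPj, k, hL⟩
      rintro rfl; exact hn hPj
    · rintro ⟨hn, hA, j, _, hPj, k, hL⟩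
      exact ⟨hn, hA, j, hPj, k, hL⟩
  -- values of the two factors
  have hU : (μ U).toReal = 1 - (1 - pA) ^ a := by
    have : U = (⋂ i, (A i)ᶜ)ᶜ := by simp [hUdef, compl_iInter]
    rw [this, cr _ (MeasurableSet.iInter fun i => (hmA i).compl), hprodA]
  have hW : (μ W).toReal = 1 - ((1 - pP) + pP * (1 - pL) ^ c) ^ (b - 1) := by
    have hWc : Wᶜ = ⋂ j ∈ Finset.univ.erase n, (P j ∩ ⋃ k, L j k)ᶜ := by
      rw [hWdef, compl_iUnion]
      ext x
      simp [ne_comm]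
    have hcard : (Finset.univ.erase n).card = b - 1 := by
      rw [Finset.card_erase_of_mem (Finset.mem_univ n)]
      simp
    have h1 : (μ Wᶜ).toReal = ((1 - pP) + pP * (1 - pL) ^ c) ^ (b - 1) := by
      rw [hWc, hprodG, ENNReal.toReal_prod]
      rw [Finset.prod_congr rfl (fun j _ => ?_), Finset.prod_const, hcard]
      rw [cr _ ((hmP j).inter (MeasurableSet.iUnion fun k => hmL j k)), hG j]
      ring
    have := cr W hmW
    rw [h1] at this
    linarith [this]
  have hPn : μ ((P n)ᶜ) ≠ 0 := by
    have : (μ ((P n)ᶜ)).toReal = 1 - pP := by rw [cr _ (hmP n), hPP]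
    intro h
    rw [h] at this
    simp at this
    linarith
  rw [ProbabilityTheory.cond_apply (hmP n).compl, hUW, hsplit, ← mul_assoc,
    ENNReal.inv_mul_cancel hPn (measure_ne_top _ _), one_mul, ENNReal.toReal_mul, hU, hW]
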